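/- The matrix Θ(u,v) is unitary: for every u ∈ ℝ and v ∈ ℂ with v ≠ 0, one has Θ(u,v)·Θ(u,v)ᴴ = I and Θ(u,v)ᴴ·Θ(u,v) = I, where ᴴ denotes the conjugate transpose. -/

import Mathlib

open Matrix

/-- The diagonalizing frame `Θ(u,v)` for the potential matrix
`V(u,v) = [[u, v],[conj v, -u]]`, with `E = √(u² + |v|²)`:
`Θ(u,v) = (2(1 + u/E))^{-1/2} · [[(1 + u/E)·conj(v)/|v|, |v|/E],[-conj(v)/E, 1 + u/E]]`. -/
noncomputable def ThetaMat (u : ℝ) (v : ℂ) : Matrix (Fin 2) (Fin 2) ℂ :=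
  let E : ℝ := Real.sqrt (u ^ 2 + ‖v‖ ^ 2)
  (((Real.sqrt (2 * (1 + u / E)))⁻¹ : ℝ) : ℂ) •
    !![((1 + u / E : ℝ) : ℂ) * (starRingEnd ℂ) v / ((‖v‖ : ℝ) : ℂ),
        ((‖v‖ : ℝ) : ℂ) / ((E : ℝ) : ℂ);
       -((starRingEnd ℂ) v) / ((E : ℝ) : ℂ),
        ((1 + u / E : ℝ) : ℂ)]

/-- The matrix `Θ(u,v)` is unitary: for every `u ∈ ℝ` and `v ∈ ℂ` with
`v ≠ 0`, one has `Θ·Θᴴ = I` and `Θᴴ·Θ = I`. -/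
theorem thetaMat_unitary (u : ℝ) (v : ℂ) (hv : v ≠ 0) :
    ThetaMat u v * (ThetaMat u v)ᴴ = 1 ∧ (ThetaMat u v)ᴴ * ThetaMat u v = 1 := by
  have key : (ThetaMat u v)ᴴ * ThetaMat u v = 1 := by
    have hvabs : 0 < ‖v‖ := norm_pos_iff.mpr hv
    set E : ℝ := Real.sqrt (u ^ 2 + ‖v‖ ^ 2) with hEdef
    have hE2 : E ^ 2 = u ^ 2 + ‖v‖ ^ 2 := Real.sq_sqrt (by positivity)
    have hEpos : 0 < E := Real.sqrt_pos.mpr (by positivity)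
    have hEu : 0 < E + u := by nlinarith [sq_nonneg (E + u)]
    set t : ℝ := 1 + u / E with htdef
    have ht : 0 < t := by rw [htdef, ← div_self hEpos.ne', ← add_div]; positivity
    set c : ℝ := (Real.sqrt (2 * t))⁻¹ with hcdef
    have hc : c ^ 2 = (2 * t)⁻¹ := by
      rw [hcdef, ← Real.sqrt_inv, Real.sq_sqrt (by positivity)]
    set a : ℝ := ‖v‖ with hadef
    have hEC : ((E : ℝ) : ℂ) ≠ 0 := by exact_mod_cast hEpos.ne'
    have haC : ((a : ℝ) : ℂ) ≠ 0 := by exact_mod_cast hvabs.ne'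
    have hvv : (starRingEnd ℂ) v * v = ((a : ℝ) : ℂ) ^ 2 := by
      rw [mul_comm, Complex.mul_conj, Complex.normSq_eq_norm_sq]; push_cast; ring
    have htC : ((t : ℝ) : ℂ) * ((E : ℝ) : ℂ) = ((E : ℝ) : ℂ) + ((u : ℝ) : ℂ) := by
      rw [htdef]; push_cast; field_simp
    have haE : ((a : ℝ) : ℂ) ^ 2 = ((E : ℝ) : ℂ) ^ 2 - ((u : ℝ) : ℂ) ^ 2 := by
      have : a ^ 2 = E ^ 2 - u ^ 2 := by rw [hE2]; ring
      exact_mod_cast this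
    set B : Matrix (Fin 2) (Fin 2) ℂ :=
      !![((t : ℝ) : ℂ) * (starRingEnd ℂ) v / ((a : ℝ) : ℂ), ((a : ℝ) : ℂ) / ((E : ℝ) : ℂ);
         -((starRingEnd ℂ) v) / ((E : ℝ) : ℂ), ((t : ℝ) : ℂ)] with hBdef
    have hTheta : ThetaMat u v = ((c : ℝ) : ℂ) • B := rfl
    clear_value B E t c a
    clear hEdef htdef hcdef hadef
    have key : Bᴴ * B = (((2 * t : ℝ) : ℂ)) • 1 := by
      ext i j
      fin_cases i <;> fin_cases j <;>
        simp only [hBdef, Matrix.mul_apply, Fin.sum_univ_two, Matrix.conjTranspose_apply,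
            Matrix.smul_apply, Matrix.one_apply, Matrix.cons_val', Matrix.cons_val_zero,
            Matrix.cons_val_one, Matrix.head_cons, Matrix.head_fin_const, Matrix.empty_val',
            Matrix.cons_val_fin_one, _root_.map_mul, map_div₀, map_neg, Complex.conj_ofReal,
            RingHomCompTriple.comp_apply, RingHom.id_apply, Fin.mk_one, Fin.zero_eta,
            Matrix.of_apply, ne_eq, one_ne_zero, not_false_eq_true, Matrix.one_apply_ne,
            Matrix.one_apply_eq, smul_eq_mul, mul_one, mul_zero]
      · simp only [star_mul', star_neg, star_div₀, Complex.star_def, _root_.map_mul, map_div₀, map_neg, Complex.conj_conj, Complex.conj_ofReal, if_true, mul_one, Complex.ofReal_mul, Complex.ofReal_ofNat]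
        field_simp
        linear_combination ((t:ℂ) ^ 2 * (E:ℂ) ^ 2 + (a:ℂ) ^ 2) * hvv +
          (a:ℂ) ^ 2 * ((t:ℂ) * (E:ℂ) + (E:ℂ) + (u:ℂ) - 2 * (E:ℂ)) * htC + (a:ℂ) ^ 2 * haE
      · simp only [StarMul.star_mul, star_neg, star_inv₀, Complex.star_def, _root_.map_mul, map_neg, map_div₀,
          Complex.conj_conj, Complex.conj_ofReal, one_ne_zero, if_false, zero_ne_one, reduceIte,
          mul_zero]
        field_simp
        ring
      · simp only [StarMul.star_mul, star_neg, star_inv₀, Complex.star_def, _root_.map_mul, map_neg, map_div₀,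
          Complex.conj_conj, Complex.conj_ofReal, one_ne_zero, if_false, zero_ne_one, reduceIte,
          mul_zero]
        field_simp
        ring
      · simp only [star_mul', star_neg, star_div₀, Complex.star_def, _root_.map_mul, map_div₀, map_neg, Complex.conj_conj, Complex.conj_ofReal, if_true, mul_one, Complex.ofReal_mul, Complex.ofReal_ofNat]
        field_simp
        linear_combination ((t:ℂ) * (E:ℂ) + (E:ℂ) + (u:ℂ) - 2 * (E:ℂ)) * htC + haE
    rw [hTheta, Matrix.conjTranspose_smul, Matrix.smul_mul, Matrix.mul_smul, key]
    rw [smul_smul, smul_smul, Complex.star_def, Complex.conj_ofReal]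
    rw [show ((c : ℝ) : ℂ) * ((c : ℝ) : ℂ) * ((2 * t : ℝ) : ℂ) = (((c ^ 2 * (2 * t) : ℝ)) : ℂ) by push_cast; ring]
    rw [hc, inv_mul_cancel₀ (by positivity : (2 * t : ℝ) ≠ 0)]
    simp
  exact ⟨mul_eq_one_comm.mpr key, key⟩
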